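/- If f : ℝ → ℝ is differentiable at p̄ ∈ (0,1) and U_i = f(p_i) for each i, then at the symmetric point p_i = p̄ for all i, the Jacobian of the replicator vector field F_i(p) = p_i Σ_{j≠i} p_j r_{ij}(f(p_i) − f(p_j)) equals p̄² f'(p̄) · M, where M is the graph Laplacian matrix with M_{ii} = Σ_{j≠i} r_{ij} and M_{ij} = −r_{ij}. -/

import Mathlib

open Finset in
/-- At the symmetric point `p_i = p̄`, the Jacobian of the replicator vector field
`F_i(p) = p_i ∑_{j≠i} p_j r_{ij}(f(p_i) − f(p_j))` equals `p̄² f'(p̄) · M`,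
where `M` is the weighted graph Laplacian. -/
theorem stmt_14 (n : ℕ) (hn : 2 ≤ n) (r : Fin n → Fin n → ℝ)
    (hsym : ∀ i j, r i j = r j i) (hpos : ∀ i j, i ≠ j → 0 < r i j)
    (f : ℝ → ℝ) (f' : ℝ) (pbar : ℝ)
    (hf : HasDerivAt f f' pbar)
    (F : (Fin n → ℝ) → Fin n → ℝ)
    (hF : ∀ p i, F p i =
      p i * ∑ j ∈ Finset.univ.filter (· ≠ i), p j * r i j * (f (p i) - f (p j)))
    (M : Matrix (Fin n) (Fin n) ℝ)
    (hMdiag : ∀ i, M i i = ∑ j ∈ Finset.univ.filter (· ≠ i), r i j)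
    (hMoff : ∀ i j, i ≠ j → M i j = -(r i j)) :
    ∀ i k : Fin n,
      HasDerivAt (fun t => F (Function.update (fun _ => pbar) k t) i)
        (pbar ^ 2 * f' * M i k) pbar := by
  intro i k
  by_cases hik : k = i
  · -- diagonal case
    subst hik
    have heq : (fun t => F (Function.update (fun _ => pbar) k t) k) =
        fun t => pbar * (t * (f t - f pbar)) * ∑ j ∈ Finset.univ.filter (· ≠ k), r k j := by
      funext t
      rw [hF]
      have h1 : Function.update (fun _ : Fin n => pbar) k t k = t :=
        Function.update_self _ _ _
      rw [h1]
      have h2 : ∑ j ∈ Finset.univ.filter (· ≠ k),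
          (Function.update (fun _ : Fin n => pbar) k t) j * r k j *
            (f t - f ((Function.update (fun _ : Fin n => pbar) k t) j))
          = ∑ j ∈ Finset.univ.filter (· ≠ k), pbar * r k j * (f t - f pbar) := by
        apply Finset.sum_congr rfl
        intro j hj
        rw [Finset.mem_filter] at hj
        rw [Function.update_of_ne hj.2]
      rw [h2, Finset.mul_sum, Finset.mul_sum]
      apply Finset.sum_congr rfl
      intro j _
      ring
    rw [heq]
    have h := (((hasDerivAt_id pbar).mul (hf.sub_const (f pbar))).const_mul pbar).mul_const
      (∑ j ∈ Finset.univ.filter (· ≠ k), r k j)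
    refine h.congr_deriv ?_
    rw [hMdiag]
    simp only [id_eq]
    ring
  · -- off-diagonal case
    have hik' : i ≠ k := fun h => hik h.symm
    have heq : (fun t => F (Function.update (fun _ => pbar) k t) i) =
        fun t => (pbar * r i k) * (t * (f pbar - f t)) := by
      funext t
      rw [hF]
      have h1 : Function.update (fun _ : Fin n => pbar) k t i = pbar :=
        Function.update_of_ne hik' _ _
      rw [h1]
      have h2 : ∑ j ∈ Finset.univ.filter (· ≠ i),
          (Function.update (fun _ : Fin n => pbar) k t) j * r i j *
            (f pbar - f ((Function.update (fun _ : Fin n => pbar) k t) j))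
          = t * r i k * (f pbar - f t) := by
        rw [Finset.sum_eq_single_of_mem k (by simp [hik])]
        · rw [Function.update_self]
        · intro j hj hjk
          rw [Function.update_of_ne hjk, sub_self, mul_zero]
      rw [h2]
      ring
    rw [heq]
    have h := ((hasDerivAt_id pbar).mul ((hasDerivAt_const pbar (f pbar)).sub hf)).const_mul
      (pbar * r i k)
    refine h.congr_deriv ?_
    rw [hMoff i k hik']
    simp only [id_eq, Pi.sub_apply, sub_self]
    ring
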